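/- Let T be a finite tree rooted at r with N vertices and let k be a natural number with N ≤ 2k. Then the set H = {v : |T(v)| > k} is totally ordered by the ancestor relation. Consequently, if H is nonempty it has a unique deepest element v_H (a unique element of which all others are ancestors), H is exactly the vertex set of the tree path from r to v_H, and T(v_H) is the unique minimal subtree of T having more than k vertices. -/

import Mathlib

/-- `u` is an ancestor of `v` in the tree `T` rooted at `r`:
`u` lies on the (unique) path in `T` from `r` to `v`. -/
def IsAncestor {V : Type*} (T : SimpleGraph V) (r u v : V) : Prop :=
  ∀ p : T.Walk r v, p.IsPath → u ∈ p.support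

/-- `T(v)`: the set of descendants of `v` in the tree `T` rooted at `r`. -/
def descendants {V : Type*} (T : SimpleGraph V) (r v : V) : Set V :=
  {w | IsAncestor T r v w}

open SimpleGraph

lemma mem_takeUntil_or {V : Type*} [DecidableEq V] {G : SimpleGraph V} {a b u w : V}
    (p : G.Walk a b) (hu : u ∈ p.support) (hw : w ∈ p.support) :
    u ∈ (p.takeUntil w hw).support ∨ w ∈ (p.takeUntil u hu).support := by
  induction p with
  | nil =>
    rw [SimpleGraph.Walk.mem_support_nil_iff] at hu
    subst hu
    exact Or.inl (Walk.start_mem_support _)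
  | @cons a c b h q ih =>
    by_cases hau : a = u
    · subst hau; exact Or.inl (Walk.start_mem_support _)
    by_cases haw : a = w
    · subst haw; exact Or.inr (Walk.start_mem_support _)
    have hu' : u ∈ q.support := by
      cases hu with
      | head => exact absurd rfl hau
      | tail _ h => exact h
    have hw' : w ∈ q.support := by
      cases hw with
      | head => exact absurd rfl haw
      | tail _ h => exact h
    simp only [Walk.takeUntil, dif_neg hau, dif_neg haw, Walk.support_cons, List.mem_cons]
    rcases ih hu' hw' with h1 | h1
    · exact Or.inl (Or.inr h1)
    · exact Or.inr (Or.inr h1)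

section Main

variable {V : Type*} [DecidableEq V] {T : SimpleGraph V} {r : V} (hT : T.IsTree)
include hT

set_option linter.unusedSectionVars false

lemma anc_iff (u v : V) (p : T.Walk r v) (hp : p.IsPath) :
    IsAncestor T r u v ↔ u ∈ p.support := by
  constructor
  · exact fun h => h p hp
  · intro h q hq
    rwa [(hT.existsUnique_path r v).unique hq hp]

lemma anc_refl (v : V) : IsAncestor T r v v := fun p _ => p.end_mem_support

lemma anc_trans {u v w : V} (huv : IsAncestor T r u v) (hvw : IsAncestor T r v w) :
    IsAncestor T r u w := by
  obtain ⟨p, hp⟩ := (hT.existsUnique_path r w).exists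
  have hv : v ∈ p.support := hvw p hp
  have htu : ((p.takeUntil v hv).IsPath) := hp.takeUntil hv
  have := huv (p.takeUntil v hv) htu
  exact (anc_iff hT u w p hp).mpr (p.support_takeUntil_subset hv this)

lemma anc_antisymm {u v : V} (huv : IsAncestor T r u v) (hvu : IsAncestor T r v u) : u = v := by
  obtain ⟨p, hp⟩ := (hT.existsUnique_path r v).exists
  have hu : u ∈ p.support := huv p hp
  have hv' : v ∈ (p.takeUntil u hu).support := hvu _ (hp.takeUntil hu)
  have hspec := p.take_spec hu
  have hnd : p.support.Nodup := hp.support_nodup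
  rw [← hspec, Walk.support_append] at hnd
  have hdisj := (List.nodup_append.mp hnd).2.2
  have hvd : v ∈ (p.dropUntil u hu).support := Walk.end_mem_support _
  rw [Walk.support_eq_cons] at hvd
  rcases List.mem_cons.mp hvd with h' | h'
  · exact h'.symm
  · exact absurd rfl (hdisj v hv' v h')

lemma anc_total_of_common {u v w : V} (hu : IsAncestor T r u w) (hv : IsAncestor T r v w) :
    IsAncestor T r u v ∨ IsAncestor T r v u := by
  obtain ⟨p, hp⟩ := (hT.existsUnique_path r w).exists
  have hu' : u ∈ p.support := hu p hp
  have hv' : v ∈ p.support := hv p hp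
  rcases mem_takeUntil_or p hu' hv' with h | h
  · exact Or.inl ((anc_iff hT u v _ (hp.takeUntil hv')).mpr h)
  · exact Or.inr ((anc_iff hT v u _ (hp.takeUntil hu')).mpr h)

lemma desc_subset {u v : V} (h : IsAncestor T r u v) :
    descendants T r v ⊆ descendants T r u :=
  fun _ hw => anc_trans hT h hw

end Main

/-- Let `T` be a finite rooted tree with `N ≤ 2k` vertices. Then
`H = {v : |T(v)| > k}` is totally ordered by the ancestor relation; consequently, if `H` is
nonempty it has a unique deepest element `v_H` (of which all elements of `H` are ancestors),
`H` is exactly the vertex set of the tree path from `r` to `v_H` (the set of ancestors of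
`v_H`), and `T(v_H)` is the unique minimal subtree with more than `k` vertices (it is
contained in `T(v)` for every `v` with `|T(v)| > k`). -/
theorem heavy_subtrees_form_chain {V : Type*} [Fintype V] (T : SimpleGraph V) (r : V)
    (hT : T.IsTree) (k : ℕ) (hN : Fintype.card V ≤ 2 * k)
    (H : Set V) (hH : H = {v | k < (descendants T r v).ncard}) :
    (∀ u ∈ H, ∀ v ∈ H, IsAncestor T r u v ∨ IsAncestor T r v u) ∧
    (H.Nonempty → ∃! vH, vH ∈ H ∧ ∀ u ∈ H, IsAncestor T r u vH) ∧
    (∀ vH ∈ H, (∀ u ∈ H, IsAncestor T r u vH) →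
      H = {u | IsAncestor T r u vH} ∧
      ∀ v : V, k < (descendants T r v).ncard → descendants T r vH ⊆ descendants T r v) := by
  classical
  subst hH
  have hchain : ∀ u, k < (descendants T r u).ncard → ∀ v, k < (descendants T r v).ncard →
      IsAncestor T r u v ∨ IsAncestor T r v u := by
    intro u hu v hv
    have hnd : ¬ Disjoint (descendants T r u) (descendants T r v) := by
      intro hd
      have hcard : (descendants T r u ∪ descendants T r v).ncard =
          (descendants T r u).ncard + (descendants T r v).ncard :=
        Set.ncard_union_eq hd (Set.toFinite _) (Set.toFinite _)
      have hle : (descendants T r u ∪ descendants T r v).ncard ≤ Fintype.card V := by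
        have := Set.ncard_le_ncard
          (Set.subset_univ (descendants T r u ∪ descendants T r v)) (Set.toFinite _)
        simpa [Set.ncard_univ, Nat.card_eq_fintype_card] using this
      omega
    obtain ⟨w, hwu, hwv⟩ := Set.not_disjoint_iff.mp hnd
    exact anc_total_of_common hT hwu hwv
  refine ⟨fun u hu v hv => hchain u hu v hv, ?_, ?_⟩
  · intro hne
    obtain ⟨vH, hvH, hmin⟩ := Set.exists_min_image _ (fun v => (descendants T r v).ncard)
      (Set.toFinite _) hne
    have hall : ∀ u ∈ {v | k < (descendants T r v).ncard}, IsAncestor T r u vH := by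
      intro u hu
      rcases hchain u hu vH hvH with h | h
      · exact h
      · have hsub := desc_subset hT h
        have h1 : (descendants T r vH).ncard ≤ (descendants T r u).ncard := hmin u hu
        have heq : descendants T r u = descendants T r vH :=
          Set.eq_of_subset_of_ncard_le hsub h1 (Set.toFinite _)
        have : vH ∈ descendants T r u := heq ▸ anc_refl hT vH
        exact this
    refine ⟨vH, ⟨hvH, hall⟩, ?_⟩
    rintro v ⟨hv, hvall⟩
    exact anc_antisymm hT (hall v hv) (hvall vH hvH)
  · intro vH hvH hall
    constructor
    · ext u
      simp only [Set.mem_setOf_eq]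
      constructor
      · intro hu; exact hall u hu
      · intro hanc
        have hsub := desc_subset hT hanc
        have := Set.ncard_le_ncard hsub (Set.toFinite _)
        exact lt_of_lt_of_le hvH this
    · intro v hv
      exact desc_subset hT (hall v hv)
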